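/- Let n ∈ ℕ and q ∈ ℂ. The (n+1)×(n+1) complex matrix M with entries M_{km} = (-1)^{k+m}·q^{(m-k)(m-k-1)/2}·C(n-k, n-m)_q satisfies σ₁(q,n)·M = 1 and M·σ₁(q,n) = 1; that is, σ₁(q,n) is invertible with inverse entries σ₁(q,n)⁻¹_{km} = (-1)^{k+m}·q^{(m-k)(m-k-1)/2}·C(n-k, n-m)_q. (Here (m-k)(m-k-1)/2 is a nonnegative integer for every integer m-k.) -/
import Mathlib


/-- The Gaussian ($q$-)binomial coefficient `C(n,k)_q`, defined by the recursion
`C(n+1,k)_q = C(n,k-1)_q + q^k * C(n,k)_q`, with `C(n,0)_q = C(n,n)_q = 1` and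
`C(n,k)_q = 0` for `k > n`. -/
noncomputable def qBinom (q : ℂ) : ℕ → ℕ → ℂ
  | 0, 0 => 1
  | 0, _ + 1 => 0
  | _ + 1, 0 => 1
  | n + 1, k + 1 => qBinom q n k + q ^ (k + 1) * qBinom q n (k + 1)

/-- The matrix `σ₁(q,n)` with entries `σ₁(q,n)_{km} = C(n-k, n-m)_q`. -/
noncomputable def sigma1 (q : ℂ) (n : ℕ) : Matrix (Fin (n + 1)) (Fin (n + 1)) ℂ :=
  fun k m => qBinom q (n - k.val) (n - m.val)

/-- The matrix `σ₂(q,n)` with entries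
`σ₂(q,n)_{km} = (-1)^{k+m} q^{-(k-m)(k-m-1)/2} C(k,m)_{q⁻¹}` for `m ≤ k`, and `0` otherwise. -/
noncomputable def sigma2 (q : ℂ) (n : ℕ) : Matrix (Fin (n + 1)) (Fin (n + 1)) ℂ :=
  fun k m =>
    if m.val ≤ k.val then
      (-1 : ℂ) ^ (k.val + m.val) *
        q ^ (-(((k.val - m.val) * (k.val - m.val - 1) / 2 : ℕ) : ℤ)) *
        qBinom q⁻¹ k.val m.val
    else 0

/-- The matrix `S(q)` with entries `S(q)_{km} = (-1)^k q^{-k(k-1)/2}` when `k+m = n`,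
and `0` otherwise. -/
noncomputable def Smat (q : ℂ) (n : ℕ) : Matrix (Fin (n + 1)) (Fin (n + 1)) ℂ :=
  fun k m =>
    if k.val + m.val = n then (-1 : ℂ) ^ k.val * q ^ (-((k.val * (k.val - 1) / 2 : ℕ) : ℤ))
    else 0

/-- `A^♯`, the matrix with entries `(A^♯)_{ij} = A_{n-i, n-j}`. -/
noncomputable def msharp {n : ℕ} (A : Matrix (Fin (n + 1)) (Fin (n + 1)) ℂ) :
    Matrix (Fin (n + 1)) (Fin (n + 1)) ℂ :=
  fun i j => A i.rev j.rev


lemma qBinom_zero (q : ℂ) : ∀ n, qBinom q n 0 = 1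
  | 0 => rfl
  | _+1 => rfl

lemma qBinom_succ (q : ℂ) (n k : ℕ) :
    qBinom q (n+1) (k+1) = qBinom q n k + q ^ (k + 1) * qBinom q n (k + 1) := rfl

lemma qBinom_eq_zero (q : ℂ) : ∀ n k, n < k → qBinom q n k = 0
  | 0, _+1, _ => rfl
  | n+1, k+1, h => by
    rw [qBinom_succ, qBinom_eq_zero q n k (by omega), qBinom_eq_zero q n (k+1) (by omega)]
    ring

lemma choose2_succ (d : ℕ) : (d+1).choose 2 = d.choose 2 + d := by
  simp [Nat.choose_succ_succ, Nat.choose_one_right, Nat.add_comm]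

lemma int_tri (t : ℕ) : (t.choose 2 : ℤ) * 2 = (t:ℤ) * ((t:ℤ) - 1) := by
  cases t with
  | zero => simp
  | succ s =>
    have he : 2 ∣ (s+1) * s := by
      rw [Nat.mul_comm]; exact (Nat.even_mul_succ_self s).two_dvd
    rw [Nat.choose_two_right, Nat.succ_sub_one]
    have h2 : (s+1) * s / 2 * 2 = (s+1) * s := Nat.div_mul_cancel he
    have h3 := congrArg (Nat.cast : ℕ → ℤ) h2
    push_cast at h3
    push_cast
    linear_combination h3

lemma int_tri_div (t : ℕ) : ((t:ℤ) * ((t:ℤ) - 1)) / 2 = (t.choose 2 : ℤ) := by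
  rw [← int_tri, Int.mul_ediv_cancel _ two_ne_zero]

noncomputable def tA (q : ℂ) (a i b : ℕ) : ℂ :=
  (-1)^(i+b) * q^((i-b).choose 2) * qBinom q a i * qBinom q i b

noncomputable def gA (q : ℂ) (a j b : ℕ) : ℂ :=
  (-1)^(j+b) * q^((j-b).choose 2 + j) * qBinom q a j * qBinom q j b

lemma auxExp (q : ℂ) (j c : ℕ) :
    q^((j-c).choose 2 + (c+1)) * qBinom q j (c+1)
      = q^((j-(c+1)).choose 2 + j) * qBinom q j (c+1) := by
  rcases le_or_gt (c+1) j with h | h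
  · have h1 : j - c = (j - (c+1)) + 1 := by omega
    have h2 := choose2_succ (j - (c+1))
    have h3 : (j-c).choose 2 + (c+1) = (j-(c+1)).choose 2 + j := by
      rw [h1, h2]; omega
    rw [h3]
  · rw [qBinom_eq_zero q j (c+1) h]; ring

lemma stepA (q : ℂ) (a j b : ℕ) :
    tA q (a+1) (j+1) b
      = (if b = 0 then 0 else tA q a j (b-1)) + gA q a (j+1) b - gA q a j b := by
  cases b with
  | zero =>
    simp only [tA, gA, qBinom_succ, qBinom_zero, if_pos rfl, if_true, Nat.sub_zero, choose2_succ]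
    ring
  | succ c =>
    simp only [tA, gA, if_neg (Nat.succ_ne_zero c), Nat.succ_sub_one,
      Nat.add_sub_add_right, qBinom_succ]
    have h := auxExp q j c
    ring_nf
    ring_nf at h
    linear_combination ((-1:ℂ))^(j+c) * qBinom q a j * h

lemma keyAux (q : ℂ) (a b : ℕ) :
    ∑ i ∈ Finset.range (a+1), tA q a i b = if b = a then 1 else 0 := by
  induction a generalizing b with
  | zero =>
    cases b with
    | zero => simp [tA, qBinom]
    | succ c => simp [tA, qBinom, qBinom_eq_zero q 0 (c+1) (Nat.succ_pos c)]
  | succ a ih =>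
    rw [Finset.sum_range_succ']
    have hsum : ∑ j ∈ Finset.range (a+1), tA q (a+1) (j+1) b
        = (∑ j ∈ Finset.range (a+1), (if b = 0 then 0 else tA q a j (b-1)))
          + (gA q a (a+1) b - gA q a 0 b) := by
      rw [← Finset.sum_range_sub (fun j => gA q a j b), ← Finset.sum_add_distrib]
      exact Finset.sum_congr rfl fun j _ => by rw [stepA]; ring
    rw [hsum]
    have hga : gA q a (a+1) b = 0 := by
      simp [gA, qBinom_eq_zero q a (a+1) (Nat.lt_succ_self a)]
    cases b with
    | zero =>
      simp only [if_pos rfl, Finset.sum_const_zero, hga]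
      have h0 : gA q a 0 0 = 1 := by simp [gA, qBinom, qBinom_zero]
      have h1 : tA q (a+1) 0 0 = 1 := by simp [tA, qBinom, qBinom_zero]
      rw [h0, h1]
      simp
    | succ c =>
      simp only [if_neg (Nat.succ_ne_zero c), Nat.succ_sub_one, hga]
      have h0 : gA q a 0 (c+1) = 0 := by simp [gA, qBinom]
      have h1 : tA q (a+1) 0 (c+1) = 0 := by simp [tA, qBinom]
      rw [h0, h1, ih c]
      by_cases h : c = a
      · simp [h]
      · simp [h, fun hh : c+1 = a+1 => h (by omega)]

lemma keyN (q : ℂ) (N a b : ℕ) (ha : a ≤ N) :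
    ∑ i ∈ Finset.range (N+1), tA q a i b = if b = a then 1 else 0 := by
  rw [← keyAux q a b]
  symm
  apply Finset.sum_subset (Finset.range_subset_range.2 (by omega))
  intro i hi hni
  simp only [Finset.mem_range] at hi hni
  simp [tA, qBinom_eq_zero q a i (by omega)]


/-- The matrix `M` with entries
`M_{km} = (-1)^{k+m} q^{(m-k)(m-k-1)/2} C(n-k, n-m)_q` is a two-sided inverse of `σ₁(q,n)`. -/
theorem sigma1_inverse (n : ℕ) (q : ℂ)
    (M : Matrix (Fin (n + 1)) (Fin (n + 1)) ℂ)
    (hM : ∀ k m : Fin (n + 1), M k m =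
      (-1 : ℂ) ^ (k.val + m.val) *
        q ^ ((((m.val : ℤ) - (k.val : ℤ)) * ((m.val : ℤ) - (k.val : ℤ) - 1)) / 2) *
        qBinom q (n - k.val) (n - m.val)) :
    sigma1 q n * M = 1 ∧ M * sigma1 q n = 1 := by
  have H : sigma1 q n * M = 1 := by
    ext k m
    rw [Matrix.mul_apply, Matrix.one_apply]
    have hk : k.val ≤ n := Fin.is_le k
    have hm : m.val ≤ n := Fin.is_le m
    have h1 : ∀ j : Fin (n+1), sigma1 q n k j * M j m
        = (-1:ℂ)^(j.val + m.val) * q^((m.val - j.val).choose 2)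
            * qBinom q (n - k.val) (n - j.val) * qBinom q (n - j.val) (n - m.val) := by
      intro j
      have hj : j.val ≤ n := Fin.is_le j
      rw [hM, sigma1]
      rcases le_or_gt j.val m.val with h | h
      · have ht : (m.val : ℤ) - (j.val : ℤ) = ((m.val - j.val : ℕ) : ℤ) := by omega
        rw [ht, int_tri_div, zpow_natCast]
        ring
      · rw [qBinom_eq_zero q (n - j.val) (n - m.val) (by omega)]
        ring
    calc ∑ j : Fin (n+1), sigma1 q n k j * M j m
        = ∑ j ∈ Finset.range (n+1), ((-1:ℂ)^(j + m.val) * q^((m.val - j).choose 2)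
            * qBinom q (n - k.val) (n - j) * qBinom q (n - j) (n - m.val)) := by
          rw [← Fin.sum_univ_eq_sum_range]
          exact Finset.sum_congr rfl fun j _ => h1 j
      _ = ∑ i ∈ Finset.range (n+1), tA q (n - k.val) i (n - m.val) := by
          rw [← Finset.sum_range_reflect]
          apply Finset.sum_congr rfl
          intro i hi
          simp only [Finset.mem_range] at hi
          have hi' : i ≤ n := by omega
          have e1 : n + 1 - 1 - i = n - i := by omega
          have e2 : n - (n - i) = i := by omega
          have e3 : m.val - (n - i) = i - (n - m.val) := by omega
          have e4 : (-1:ℂ)^(n - i + m.val) = (-1:ℂ)^(i + (n - m.val)) := by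
            rw [neg_one_pow_eq_pow_mod_two, neg_one_pow_eq_pow_mod_two (n := i + (n - m.val))]
            congr 1
            omega
          rw [e1, e2, e3, e4, tA]
      _ = if (k = m : Prop) then 1 else 0 := by
          rw [keyN q n (n - k.val) (n - m.val) (Nat.sub_le n k.val)]
          by_cases h : k = m
          · simp [h]
          · have : ¬ (n - m.val = n - k.val) := fun hh =>
              h (Fin.ext (by omega))
            simp [h, this]
  exact ⟨H, mul_eq_one_comm.mp H⟩
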